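/- Let S ⊆ R be SRSs over Σ_A and let rotate_rel(S,R) = (S', rotate(R)) where S' = {W ℓ → B r | (ℓ → r) ∈ S}. Then S' is string terminating relative to rotate(R) (i.e., →_{S'} is terminating relative to →_{rotate(R)}) if and only if S is cycle terminating relative to R (i.e., ∘→_S is terminating relative to ∘→_R). -/

import Mathlib

namespace CycleRewriting

/-- A binary relation is terminating if there is no infinite reduction sequence. -/
def Terminating {beta : Type*} (r : beta → beta → Prop) : Prop :=
  ¬ ∃ f : ℕ → beta, ∀ n : ℕ, r (f n) (f (n + 1))

/-- `r₁` is terminating relative to `r₂` iff every infinite `r₂`-sequence contains only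
finitely many `r₁`-steps. -/
def RelTerminating {beta : Type*} (r₁ r₂ : beta → beta → Prop) : Prop :=
  ¬ ∃ f : ℕ → beta, (∀ n : ℕ, r₂ (f n) (f (n + 1))) ∧
      {n : ℕ | r₁ (f n) (f (n + 1))}.Infinite

/-- The string rewrite relation of an SRS `R`. -/
def Step {α : Type*} (R : Set (List α × List α)) (x y : List α) : Prop :=
  ∃ u v l r, (l, r) ∈ R ∧ x = u ++ l ++ v ∧ y = u ++ r ++ v

/-- The prefix rewrite relation of an SRS `R`. -/
def PrefixStep {α : Type*} (R : Set (List α × List α)) (x y : List α) : Prop :=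
  ∃ l r w, (l, r) ∈ R ∧ x = l ++ w ∧ y = r ++ w

/-- The rotation equivalence `u ~ v` iff `u = w₁w₂` and `v = w₂w₁`. -/
def Sim {α : Type*} (u v : List α) : Prop :=
  ∃ w₁ w₂, u = w₁ ++ w₂ ∧ v = w₂ ++ w₁

/-- The cycle rewrite relation of an SRS `R` (on representatives of `Sim`-classes):
`[u] ∘→_R [v]` iff there are a rule `(l, r) ∈ R` and `w` with `l ++ w ∈ [u]` and
`r ++ w ∈ [v]`. -/
def CycleStep {α : Type*} (R : Set (List α × List α)) (x y : List α) : Prop :=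
  ∃ l r w, (l, r) ∈ R ∧ Sim (l ++ w) x ∧ Sim (r ++ w) y

/-- The shift relation `↷`: move the first symbol of a string to its end. -/
def Rot {α : Type*} (u v : List α) : Prop :=
  ∃ a w, u = a :: w ∧ v = w ++ [a]

/-- `k`-fold composition of a relation. -/
def RelPow {beta : Type*} (r : beta → beta → Prop) : ℕ → beta → beta → Prop
  | 0 => Eq
  | n + 1 => Relation.Comp r (RelPow r n)

/-- `lenSRS R` is the maximal length of a left-hand side of a rule of `R`. -/
noncomputable def lenSRS {α : Type*} (R : Set (List α × List α)) : ℕ :=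
  sSup ((fun p : List α × List α => p.1.length) '' R)

/-- The alphabet of `rot Σ_A`/`rotate R`: the original alphabet `Σ_A`, four fresh
copies `Σ_B, Σ_C, Σ_D, Σ_E`, and fresh symbols `B, E, W, R, G, O, C, L, S, F, f`. -/
inductive RotSym (α : Type*) where
  | ca : α → RotSym α            -- Σ_A
  | cb : α → RotSym α            -- Σ_B
  | cc : α → RotSym α            -- Σ_C
  | cd : α → RotSym α            -- Σ_D
  | ce : α → RotSym α            -- Σ_E
  | symB : RotSym α
  | symE : RotSym α
  | symW : RotSym α
  | symR : RotSym α
  | symG : RotSym α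
  | symO : RotSym α
  | symC : RotSym α
  | symL : RotSym α
  | symS : RotSym α
  | symF : RotSym α
  | symf : RotSym α

open RotSym in
/-- The string rewrite system `rot Σ_A`. -/
def rotSRS (α : Type*) : Set (List (RotSym α) × List (RotSym α)) :=
  { p | p = ([symB, symE], [symW, symE]) ∨                                    -- rotA
        (∃ a : α, p = ([symB, ca a], [symO, symC, cd a, symG])) ∨             -- rotB
        (∃ a : α, p = ([symG, ca a], [cd a, symG])) ∨                         -- rotC
        (∃ a : α, p = ([symG, ca a], [symL, cc a, symS])) ∨                   -- rotD
        p = ([symG, symE], [symF, symE]) ∨                                    -- rotE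
        (∃ c d : α, p = ([cd d, symL, cc c], [symL, cc c, cb d])) ∨           -- rotF
        (∃ c : α, p = ([symC, symL, cc c], [ce c, symC, symR])) ∨             -- rotG
        (∃ b : α, p = ([symR, cb b], [cd b, symR])) ∨                         -- rotH
        (∃ a : α, p = ([symR, symS, ca a], [symL, cc a, symS])) ∨             -- rotI
        p = ([symR, symS, symE], [symF, symE]) ∨                              -- rotJ
        (∃ d : α, p = ([cd d, symF], [symF, ca d])) ∨                         -- rotK
        p = ([symC, symF], [symf]) ∨                                          -- rotL
        (∃ e : α, p = ([ce e, symf], [symf, ca e])) ∨                         -- rotM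
        p = ([symO, symf], [symW]) }                                          -- rotN

open RotSym in
/-- The transformation `rotate`: `rot Σ_A` plus `W ℓ → B r` for every rule `ℓ → r`. -/
def rotateSRS {α : Type*} (R : Set (List α × List α)) :
    Set (List (RotSym α) × List (RotSym α)) :=
  rotSRS α ∪ { p | ∃ l r, (l, r) ∈ R ∧ p = (symW :: l.map ca, symB :: r.map ca) }

section Dev
open RotSym List Relation

variable {α : Type*}

local notation "Sym" => RotSym α

/-! ### Sim basics -/

theorem sim_iff_isRotated {u v : List α} : Sim u v ↔ u ~r v := by
  constructor
  · rintro ⟨w₁, w₂, rfl, rfl⟩; exact List.isRotated_append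
  · intro h
    rcases List.isRotated_iff_mod.1 h with ⟨n, hn, rfl⟩
    exact ⟨u.take n, u.drop n, (List.take_append_drop n u).symm,
      (List.rotate_eq_drop_append_take hn)⟩

theorem sim_refl (u : List α) : Sim u u := ⟨u, [], by simp, by simp⟩

theorem cycleStep_rotRight {T : Set (List α × List α)} {x y y' : List α}
    (h : CycleStep T x y) (h' : y ~r y') : CycleStep T x y' := by
  obtain ⟨l, r, w, hT, h1, h2⟩ := h
  exact ⟨l, r, w, hT, h1, sim_iff_isRotated.2 ((sim_iff_isRotated.1 h2).trans h')⟩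

theorem cycleStep_mono {T T' : Set (List α × List α)} (hTT : T ⊆ T') {x y : List α}
    (h : CycleStep T x y) : CycleStep T' x y := by
  obtain ⟨l, r, w, hT, h1, h2⟩ := h; exact ⟨l, r, w, hTT hT, h1, h2⟩

/-! ### Step basics -/

theorem step_intro {T : Set (List α × List α)} {l r : List α} (h : (l, r) ∈ T)
    (u v : List α) : Step T (u ++ l ++ v) (u ++ r ++ v) :=
  ⟨u, v, l, r, h, rfl, rfl⟩

theorem step_context {T : Set (List α × List α)} {x y : List α} (h : Step T x y)
    (u v : List α) : Step T (u ++ x ++ v) (u ++ y ++ v) := by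
  obtain ⟨u', v', l, r, hT, rfl, rfl⟩ := h
  refine ⟨u ++ u', v' ++ v, l, r, hT, by simp, by simp⟩

theorem step_mono {T T' : Set (List α × List α)} (hTT : T ⊆ T') {x y : List α}
    (h : Step T x y) : Step T' x y := by
  obtain ⟨u, v, l, r, hT, rfl, rfl⟩ := h; exact ⟨u, v, l, r, hTT hT, rfl, rfl⟩

theorem rtg_context {T : Set (List α × List α)} {x y : List α}
    (h : ReflTransGen (Step T) x y) (u v : List α) :
    ReflTransGen (Step T) (u ++ x ++ v) (u ++ y ++ v) := by
  induction h with
  | refl => exact .refl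
  | tail _ hstep ih => exact ih.tail (step_context hstep u v)

end Dev
section Dev2
open RotSym List Relation

variable {α : Type*}

local notation "Sym" => RotSym α

/-! ### states -/

/-- state symbols -/
def qb : RotSym α → Bool
  | symB => true | symW => true | symG => true | symL => true
  | symR => true | symF => true | symf => true
  | _ => false

/-- number of state symbols -/
def qc (t : List (RotSym α)) : ℕ := t.countP qb

@[simp] theorem qc_nil : qc ([] : List Sym) = 0 := rfl

@[simp] theorem qc_append (a b : List Sym) : qc (a ++ b) = qc a + qc b :=
  List.countP_append

@[simp] theorem qc_cons (x : Sym) (a : List Sym) :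
    qc (x :: a) = qc a + (if qb x then 1 else 0) := by
  simp [qc, List.countP_cons]

@[simp] theorem qc_map_ca (l : List α) : qc (l.map ca) = 0 := by
  induction l with
  | nil => rfl
  | cons a l ih => simp [ih, qb]

@[simp] theorem qc_map_cb (l : List α) : qc (l.map cb) = 0 := by
  induction l with
  | nil => rfl
  | cons a l ih => simp [ih, qb]

@[simp] theorem qc_map_cc (l : List α) : qc (l.map cc) = 0 := by
  induction l with
  | nil => rfl
  | cons a l ih => simp [ih, qb]

@[simp] theorem qc_map_cd (l : List α) : qc (l.map cd) = 0 := by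
  induction l with
  | nil => rfl
  | cons a l ih => simp [ih, qb]

@[simp] theorem qc_map_ce (l : List α) : qc (l.map ce) = 0 := by
  induction l with
  | nil => rfl
  | cons a l ih => simp [ih, qb]

/-! ### blocks -/

/-- The good block shapes. -/
inductive Blk (α : Type*) where
  | bW (al : List α)
  | bB (al : List α)
  | bG (dl al : List α)
  | bL (el dl : List α) (c : α) (bl al : List α)
  | bR (el dl bl al : List α)
  | bF (el dl al : List α)
  | bf (el al : List α)

/-- the string of a block -/
def bstr : Blk α → List (RotSym α)
  | .bW al => symW :: al.map ca
  | .bB al => symB :: al.map ca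
  | .bG dl al => symO :: symC :: dl.map cd ++ symG :: al.map ca
  | .bL el dl c bl al =>
      symO :: el.map ce ++ symC :: dl.map cd ++ symL :: cc c :: bl.map cb ++ symS :: al.map ca
  | .bR el dl bl al =>
      symO :: el.map ce ++ symC :: dl.map cd ++ symR :: bl.map cb ++ symS :: al.map ca
  | .bF el dl al => symO :: el.map ce ++ symC :: dl.map cd ++ symF :: al.map ca
  | .bf el al => symO :: el.map ce ++ symf :: al.map ca

/-- the decoded cycle word of a block -/
def phi : Blk α → List α
  | .bW al => al
  | .bB al => al
  | .bG dl al => dl ++ al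
  | .bL el dl c bl al => bl ++ el ++ c :: al ++ dl
  | .bR el dl bl al => bl ++ el ++ al ++ dl
  | .bF el dl al => el ++ dl ++ al
  | .bf el al => el ++ al

/-- no `ca` at the head -/
def noCA : List (RotSym α) → Prop
  | ca _ :: _ => False
  | _ => True

@[simp] theorem noCA_nil : noCA ([] : List Sym) := trivial

theorem noCA_iff {q : List Sym} : noCA q ↔ ∀ (a : α) (t : List Sym), q ≠ ca a :: t := by
  cases q with
  | nil => simp [noCA]
  | cons x t =>
    cases x <;> simp [noCA]

/-- split off the maximal `ca` prefix -/
def caSplit : List (RotSym α) → List α × List (RotSym α)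
  | ca a :: t => ((caSplit t).1.cons a, (caSplit t).2)
  | t => ([], t)

theorem caSplit_spec (v : List Sym) :
    v = (caSplit v).1.map ca ++ (caSplit v).2 ∧ noCA (caSplit v).2 := by
  induction v with
  | nil => exact ⟨rfl, trivial⟩
  | cons x t ih =>
    cases x with
    | ca a => simpa [caSplit] using ih
    | cb a => exact ⟨rfl, trivial⟩
    | cc a => exact ⟨rfl, trivial⟩
    | cd a => exact ⟨rfl, trivial⟩
    | ce a => exact ⟨rfl, trivial⟩
    | symB => exact ⟨rfl, trivial⟩
    | symE => exact ⟨rfl, trivial⟩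
    | symW => exact ⟨rfl, trivial⟩
    | symR => exact ⟨rfl, trivial⟩
    | symG => exact ⟨rfl, trivial⟩
    | symO => exact ⟨rfl, trivial⟩
    | symC => exact ⟨rfl, trivial⟩
    | symL => exact ⟨rfl, trivial⟩
    | symS => exact ⟨rfl, trivial⟩
    | symF => exact ⟨rfl, trivial⟩
    | symf => exact ⟨rfl, trivial⟩

end Dev2
section Dev3
open RotSym List Relation

variable {α : Type*}

local notation "Sym" => RotSym α

/-- alignment of decompositions at a state symbol -/
theorem align {a b c d : List Sym} {X Y : Sym} (h : a ++ X :: b = c ++ Y :: d)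
    (hq : qc a = qc c) (hX : qb X) (hY : qb Y) : a = c ∧ X = Y ∧ b = d := by
  rcases List.append_eq_append_iff.1 h with ⟨w, hw1, hw2⟩ | ⟨w, hw1, hw2⟩
  · cases w with
    | nil => simp at hw1 hw2; exact ⟨hw1.symm, hw2.1, hw2.2⟩
    | cons z w' =>
      exfalso
      obtain rfl : X = z := by simpa using congrArg (fun l => l.head?) hw2
      subst hw1
      simp [hX] at hq
  · cases w with
    | nil => simp at hw1 hw2; exact ⟨hw1, hw2.1.symm, hw2.2.symm⟩
    | cons z w' =>
      exfalso
      obtain rfl : Y = z := by simpa using congrArg (fun l => l.head?) hw2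
      subst hw1
      simp [hY] at hq

theorem snoc_eq_snoc {x y : List Sym} {a b : Sym} (h : x ++ [a] = y ++ [b]) :
    x = y ∧ a = b := by
  have := List.append_inj' h rfl
  simpa using this

/-- peeling a `ca`-mapped prefix against a `ca`-mapped list with a non-ca tail -/
theorem ca_prefix_peel {l₀ : List α} {v : List Sym} {al : List α} {q : List Sym}
    (h : l₀.map ca ++ v = al.map ca ++ q) (hq : noCA q) :
    ∃ al', al = l₀ ++ al' ∧ v = al'.map ca ++ q := by
  induction l₀ generalizing al with
  | nil =>
    cases al with
    | nil => exact ⟨[], rfl, by simpa using h⟩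
    | cons a al' => exact ⟨a :: al', rfl, by simpa using h⟩
  | cons a l₀' ih =>
    cases al with
    | nil =>
      exfalso
      simp only [List.map_nil, List.nil_append, List.map_cons, List.cons_append] at h
      rw [noCA_iff] at hq
      exact hq a _ h.symm
    | cons a' al' =>
      simp only [List.map_cons, List.cons_append, List.cons.injEq] at h
      obtain ⟨ha, h⟩ := h
      have ha' : a = a' := by injection ha
      obtain ⟨al'', h1, h2⟩ := ih h
      exact ⟨al'', by rw [h1, ha']; rfl, h2⟩

/-- a cons-headed equation: peel one non-ca symbol against map-ca ++ q  -/
theorem head_not_ca {x : Sym} {v : List Sym} {al : List α} {q : List Sym}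
    (h : x :: v = al.map ca ++ q) (hx : ∀ a : α, x ≠ ca a) :
    al = [] ∧ q = x :: v := by
  cases al with
  | nil => simpa using h.symm
  | cons a al' =>
    exfalso
    simp only [List.map_cons, List.cons_append, List.cons.injEq] at h
    exact hx a h.1

/-- heads of block strings are O, W or B -/
theorem bstr_head (b : Blk α) : ∃ t, bstr b = symO :: t ∨ bstr b = symW :: t ∨
    bstr b = symB :: t := by
  cases b <;> simp [bstr]

/-- block strings never end in `cd`, `symC`, `ce`, `symO` -/
theorem bstr_last {b : Blk α} {w : List Sym} {x : Sym} (h : bstr b = w ++ [x]) :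
    (∀ a : α, x ≠ cd a) ∧ x ≠ symC ∧ (∀ a : α, x ≠ ce a) ∧ x ≠ symO := by
  have key : ∀ (y : List Sym) (z : Sym) (al : List α),
      (z = symW ∨ z = symB ∨ z = symG ∨ z = symS ∨ z = symF ∨ z = symf) →
      y ++ z :: al.map ca = w ++ [x] →
      (∀ a : α, x ≠ cd a) ∧ x ≠ symC ∧ (∀ a : α, x ≠ ce a) ∧ x ≠ symO := by
    intro y z al hz hyz
    rcases al.eq_nil_or_concat with rfl | ⟨al', a, rfl⟩
    · simp only [List.map_nil] at hyz
      have : y ++ [z] = w ++ [x] := by simpa using hyz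
      obtain ⟨-, rfl⟩ := snoc_eq_snoc this
      rcases hz with rfl | rfl | rfl | rfl | rfl | rfl <;> simp
    · have : (y ++ z :: al'.map ca) ++ [ca a] = w ++ [x] := by
        simpa [List.concat_eq_append] using hyz
      obtain ⟨-, rfl⟩ := snoc_eq_snoc this
      simp
  cases b with
  | bW al => exact key [] symW al (by tauto) (by simpa [bstr] using h)
  | bB al => exact key [] symB al (by tauto) (by simpa [bstr] using h)
  | bG dl al => exact key (symO :: symC :: dl.map cd) symG al (by tauto) (by simpa [bstr] using h)
  | bL el dl c bl al => exact key (symO :: el.map ce ++ symC :: dl.map cd ++ symL :: cc c :: bl.map cb) symS al (by tauto) (by simpa [bstr] using h)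
  | bR el dl bl al => exact key (symO :: el.map ce ++ symC :: dl.map cd ++ symR :: bl.map cb) symS al (by tauto) (by simpa [bstr] using h)
  | bF el dl al => exact key (symO :: el.map ce ++ symC :: dl.map cd) symF al (by tauto) (by simpa [bstr] using h)
  | bf el al => exact key (symO :: el.map ce) symf al (by tauto) (by simpa [bstr] using h)

@[simp] theorem qc_bstr (b : Blk α) : qc (bstr b) = 1 := by
  cases b <;> simp [bstr, qb]

theorem bstr_ne_nil (b : Blk α) : bstr b ≠ [] := by
  cases b <;> simp [bstr]

end Dev3
set_option linter.unnecessarySimpa false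

section Dev4
open RotSym List Relation

variable {α : Type*}

local notation "Sym" => RotSym α

/-- part of the block string before the state symbol -/
def bp1 : Blk α → List (RotSym α)
  | .bW _ => []
  | .bB _ => []
  | .bG dl _ => symO :: symC :: dl.map cd
  | .bL el dl _ _ _ => symO :: el.map ce ++ symC :: dl.map cd
  | .bR el dl _ _ => symO :: el.map ce ++ symC :: dl.map cd
  | .bF el dl _ => symO :: el.map ce ++ symC :: dl.map cd
  | .bf el _ => symO :: el.map ce

/-- the state symbol of a block -/
def bq : Blk α → RotSym α
  | .bW _ => symW
  | .bB _ => symB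
  | .bG _ _ => symG
  | .bL _ _ _ _ _ => symL
  | .bR _ _ _ _ => symR
  | .bF _ _ _ => symF
  | .bf _ _ => symf

/-- part of the block string after the state symbol -/
def bp2 : Blk α → List (RotSym α)
  | .bW al => al.map ca
  | .bB al => al.map ca
  | .bG _ al => al.map ca
  | .bL _ _ c bl al => cc c :: bl.map cb ++ symS :: al.map ca
  | .bR _ _ bl al => bl.map cb ++ symS :: al.map ca
  | .bF _ _ al => al.map ca
  | .bf _ al => al.map ca

theorem bstr_eq_parts (b : Blk α) : bstr b = bp1 b ++ bq b :: bp2 b := by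
  cases b <;> simp [bstr, bp1, bq, bp2]

@[simp] theorem qc_bp1 (b : Blk α) : qc (bp1 b) = 0 := by
  cases b <;> simp [bp1, qb]

@[simp] theorem qb_bq (b : Blk α) : qb (bq b) = true := by
  cases b <;> simp [bq, qb]

theorem noCA_append {r t : List Sym} (hr : noCA r) (hrne : r ≠ []) : noCA (r ++ t) := by
  cases r with
  | nil => exact absurd rfl hrne
  | cons x r' => cases x <;> simpa [noCA] using hr

/-- a witness that `t` has a good block as its `i`-th state region -/
def GoodW (t : List (RotSym α)) (i : ℕ) (b : Blk α) : Prop :=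
  ∃ p q, t = p ++ bstr b ++ q ∧ qc p = i ∧ noCA q

theorem tail_mem {l w w2' : List Sym} {z : Sym} (hl : l = w ++ z :: w2') (hw : w ≠ []) :
    z ∈ l.tail := by
  cases w with
  | nil => exact absurd rfl hw
  | cons x w' => subst hl; simp

theorem split3 {a b c d : List Sym} (h : a ++ b = c ++ d) :
    (∃ w, c = a ++ w ∧ b = w ++ d) ∨ (∃ w, a = c ++ w ∧ d = w ++ b) :=
  List.append_eq_append_iff.1 h

/-- the main geometric skeleton: a rewrite step either misses the block entirely,
or aligns with its state symbol. -/
theorem skeleton {l r u v p q lx ly : List Sym} {X : Sym} {b : Blk α}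
    (heq : u ++ l ++ v = p ++ bstr b ++ q) (hq : noCA q)
    (hl : l = lx ++ X :: ly) (hX : qb X) (hlx0 : qc lx = 0) (hly0 : qc ly = 0)
    (hlxc : lx = [] ∨ ∃ x, lx = [x] ∧
      ((∃ a : α, x = cd a) ∨ x = symC ∨ (∃ a : α, x = ce a) ∨ x = symO))
    (hOWB : ∀ z ∈ l.tail, z ≠ symO ∧ z ≠ symW ∧ z ≠ symB)
    (hr1 : qc r = 1) (hrne : r ≠ []) (hrCA : noCA r) :
    (GoodW (u ++ r ++ v) (qc p) b ∧ qc u ≠ qc p) ∨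
      (qc u = qc p ∧ u ++ lx = p ++ bp1 b ∧ X = bq b ∧ ly ++ v = bp2 b ++ q) := by
  have hl1 : qc l = 1 := by simp [hl, hlx0, hly0, hX]
  by_cases hqc : qc u = qc p
  · -- aligned case
    right
    refine ⟨hqc, ?_⟩
    have heq' : (u ++ lx) ++ X :: (ly ++ v) = (p ++ bp1 b) ++ bq b :: (bp2 b ++ q) := by
      rw [hl, bstr_eq_parts b] at heq
      simpa [List.append_assoc] using heq
    have hal := align heq' (by simp [hlx0, hqc]) hX (qb_bq b)
    exact ⟨hal.1, hal.2.1, hal.2.2⟩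
  · refine Or.inl ⟨?_, hqc⟩
    have heq2 : u ++ (l ++ v) = p ++ (bstr b ++ q) := by
      simpa [List.append_assoc] using heq
    rcases split3 heq2 with ⟨w, hpw, hlv⟩ | ⟨w, huw, hbq2⟩
    · -- hpw : p = u ++ w
      rcases split3 hlv with ⟨w2, hw2, hv⟩ | ⟨w2, hlw, hvb⟩
      · -- l inside p: w = l ++ w2
        refine ⟨u ++ r ++ w2, q, ?_, ?_, hq⟩
        · rw [hv]; simp [List.append_assoc]
        · rw [hpw, hw2]
          simp only [qc_append, hr1, hl1]
          omega
      · -- l = w ++ w2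
        cases w with
        | nil => exact absurd (by simp [hpw]) hqc
        | cons z0 w' =>
          cases w2 with
          | nil =>
            have hwl : (z0 :: w' : List Sym) = l := by simpa using hlw.symm
            have hv : v = bstr b ++ q := by simpa using hvb.symm
            refine ⟨u ++ r, q, by rw [hv]; simp, ?_, hq⟩
            rw [hpw, hwl]
            simp only [qc_append, hr1, hl1]
          | cons z w2' =>
            exfalso
            obtain ⟨t, hbh⟩ := bstr_head b
            have hzh : bstr b ++ q = z :: (w2' ++ v) := by simpa using hvb
            have hOWBz := hOWB z (tail_mem hlw (by simp))
            rcases hbh with hbh | hbh | hbh <;> rw [hbh] at hzh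
            · have hz : symO = z := by simpa using congrArg List.head? hzh
              exact hOWBz.1 hz.symm
            · have hz : symW = z := by simpa using congrArg List.head? hzh
              exact hOWBz.2.1 hz.symm
            · have hz : symB = z := by simpa using congrArg List.head? hzh
              exact hOWBz.2.2 hz.symm
    · -- huw : u = p ++ w, hbq2 : bstr b ++ q = w ++ (l ++ v)
      rcases split3 hbq2 with ⟨w2, hww, hqq⟩ | ⟨w2, hbw, hqlv⟩
      · -- w = bstr b ++ w2, q = w2 ++ (l ++ v) : l inside q
        refine ⟨p, w2 ++ r ++ v, ?_, rfl, ?_⟩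
        · rw [huw, hww]; simp [List.append_assoc]
        · cases w2 with
          | nil => simpa using noCA_append hrCA hrne (t := v)
          | cons z w2'' =>
            have hthis : noCA (z :: (w2'' ++ (l ++ v))) := by
              rw [hqq] at hq; simpa using hq
            rw [noCA_iff] at hthis ⊢
            intro a t' hcon
            have hz : z = ca a := by
              have := congrArg List.head? hcon; simpa using this
            exact hthis a (w2'' ++ (l ++ v)) (by rw [hz])
      · -- hbw : bstr b = w ++ w2, hqlv : l ++ v = w2 ++ q
        rcases split3 hqlv with ⟨w3, hw23, hv3⟩ | ⟨w3, hl2, hq3⟩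
        · -- w2 = l ++ w3 : l inside bstr b
          exfalso; apply hqc
          have h1 : qc w + (qc l + qc w3) = 1 := by
            rw [← qc_bstr b, hbw, hw23]; simp
          rw [hl1] at h1
          have hw0 : qc w = 0 := by omega
          rw [huw]; simp [hw0]
        · -- hl2 : l = w2 ++ w3, hq3 : q = w3 ++ v
          cases w2 with
          | nil =>
            have hwb : bstr b = w := by simpa using hbw
            have hq4 : q = l ++ v := by simpa using hqlv.symm
            refine ⟨p, r ++ v, ?_, rfl, noCA_append hrCA hrne⟩
            rw [huw, ← hwb]; simp [List.append_assoc]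
          | cons x w2t =>
            exfalso
            have h1 : qc w + qc (x :: w2t) = 1 := by
              rw [← qc_bstr b, hbw]; simp
            have hqcw2 : qc (x :: w2t) = 0 := by
              by_contra hne
              have hw0 : qc w = 0 := by omega
              exact hqc (by rw [huw]; simp [hw0])
            rcases hlxc with rfl | ⟨x0, hlx, hbad⟩
            · have h2 : (X :: ly : List Sym) = x :: (w2t ++ w3) := by
                rw [hl] at hl2; simpa using hl2
              injection h2 with h2a h2b
              rw [← h2a] at hqcw2
              simp [hX] at hqcw2
            · have h2 : (x0 :: X :: ly : List Sym) = x :: (w2t ++ w3) := by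
                rw [hlx] at hl; rw [hl] at hl2; simpa using hl2
              injection h2 with h2a h2b
              cases w2t with
              | nil =>
                have hlast := bstr_last hbw
                rcases hbad with ⟨a, hxa⟩ | hxa | ⟨a, hxa⟩ | hxa <;> rw [hxa] at h2a
                · exact hlast.1 a h2a.symm
                · exact hlast.2.1 h2a.symm
                · exact hlast.2.2.1 a h2a.symm
                · exact hlast.2.2.2 h2a.symm
              | cons y w2t' =>
                injection h2b with h2c _
                rw [← h2c] at hqcw2
                simp [hX] at hqcw2
  
end Dev4
section Dev5
open RotSym List Relation

variable {α : Type*}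

local notation "Sym" => RotSym α

theorem peel_last {u p w : List Sym} {x z : Sym} {w' : List Sym}
    (h : u ++ [x] = p ++ w) (hw : w = w' ++ [z]) : u = p ++ w' ∧ x = z := by
  apply snoc_eq_snoc
  rw [h, hw, ← List.append_assoc]

theorem rot_of_eq {a b : List α} (h : a = b) : a ~r b := h ▸ .refl _

theorem rule_qc {Rl : Set (List α × List α)} {l r : List Sym}
    (h : (l, r) ∈ rotateSRS Rl) : qc l = 1 ∧ qc r = 1 := by
  rcases h with h | ⟨l₀, r₀, -, h⟩
  · rcases h with h | ⟨a, h⟩ | ⟨a, h⟩ | ⟨a, h⟩ | h | ⟨c, d, h⟩ | ⟨c, h⟩ | ⟨b, h⟩ | ⟨a, h⟩ |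
      h | ⟨d, h⟩ | h | ⟨e, h⟩ | h <;>
      (rw [Prod.mk.injEq] at h; obtain ⟨rfl, rfl⟩ := h) <;> simp [qb]
  · rw [Prod.mk.injEq] at h; obtain ⟨rfl, rfl⟩ := h
    simp [qb]
end Dev5
section Dev6
open RotSym List Relation

variable {α : Type*}

local notation "Sym" => RotSym α

/-- The key lemma: one rewrite step, relative to a good block. -/
theorem key_step {Rl : Set (List α × List α)} {l r u v p q : List (RotSym α)} {b : Blk α}
    (hrule : (l, r) ∈ rotateSRS Rl)
    (heq : u ++ l ++ v = p ++ bstr b ++ q) (hq : noCA q) :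
    ∃ b', GoodW (u ++ r ++ v) (qc p) b' ∧
      ((phi b ~r phi b' ∧
          ¬(qc u = qc p ∧ ∃ l₀ : List α, l = symW :: l₀.map ca)) ∨
        (∃ l₀ r₀ w, l = symW :: l₀.map ca ∧ r = symB :: r₀.map ca ∧
          Sim (l₀ ++ w) (phi b) ∧ Sim (r₀ ++ w) (phi b'))) := by
  rcases hrule with h | ⟨l₀, r₀, hR, h⟩
  · rcases h with h | ⟨a, h⟩ | ⟨a, h⟩ | ⟨a, h⟩ | h | ⟨c, d, h⟩ | ⟨c, h⟩ | ⟨b₀, h⟩ | ⟨a, h⟩ |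
      h | ⟨d, h⟩ | h | ⟨e, h⟩ | h <;> (rw [Prod.mk.injEq] at h; obtain ⟨rfl, rfl⟩ := h)
    -- rotA : B E → W E
    · rcases skeleton (r := [symW, symE]) heq hq (lx := []) (X := symB) (ly := [symE]) rfl rfl rfl (by simp [qb])
        (Or.inl rfl) (by intro z hz; simp at hz; subst hz; simp) (by simp [qb]) (by simp)
        trivial with ⟨hgood, hqne⟩ | ⟨hqup, hu, hXY, hlyv⟩
      · exact ⟨b, hgood, Or.inl ⟨.refl _, fun h => hqne h.1⟩⟩
      · cases b <;> simp only [bq, reduceCtorEq] at hXY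
        case bB al =>
        have hu' : u = p := by simpa [bp1] using hu
        obtain ⟨rfl, hq2⟩ := head_not_ca (by simpa [bp2] using hlyv) (by simp)
        refine ⟨Blk.bW [], ⟨p, symE :: v, ?_, rfl, by rw [← hq2]; exact hq⟩, Or.inl ⟨?_,
          by rintro ⟨-, l₀, hl₀⟩; simp at hl₀⟩⟩
        · rw [hu']; simp [bstr]
        · exact rot_of_eq (by simp [phi])
    -- rotB : B a → O C a^D G
    · rcases skeleton (r := [symO, symC, cd a, symG]) heq hq (lx := []) (X := symB) (ly := [ca a]) rfl rfl rfl (by simp [qb])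
        (Or.inl rfl) (by intro z hz; simp at hz; subst hz; simp) (by simp [qb]) (by simp)
        trivial with ⟨hgood, hqne⟩ | ⟨hqup, hu, hXY, hlyv⟩
      · exact ⟨b, hgood, Or.inl ⟨.refl _, fun h => hqne h.1⟩⟩
      · cases b <;> simp only [bq, reduceCtorEq] at hXY
        case bB al =>
        have hu' : u = p := by simpa [bp1] using hu
        have hlyv' : ca a :: v = al.map ca ++ q := by simpa [bp2] using hlyv
        cases al with
        | nil =>
          exfalso; rw [noCA_iff] at hq; exact hq a v (by simpa using hlyv'.symm)
        | cons a' al' =>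
          simp only [List.map_cons, List.cons_append, List.cons.injEq] at hlyv'
          obtain ⟨ha, hv⟩ := hlyv'
          obtain rfl : a = a' := by injection ha
          refine ⟨Blk.bG [a] al', ⟨p, q, ?_, rfl, hq⟩, Or.inl ⟨rot_of_eq (by simp [phi]), by rintro ⟨-, l₀, hl₀⟩; simp at hl₀⟩⟩
          rw [hu', hv]; simp [bstr]
    -- rotC : G a → a^D G
    · rcases skeleton (r := [cd a, symG]) heq hq (lx := []) (X := symG) (ly := [ca a]) rfl rfl rfl (by simp [qb])
        (Or.inl rfl) (by intro z hz; simp at hz; subst hz; simp) (by simp [qb]) (by simp)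
        trivial with ⟨hgood, hqne⟩ | ⟨hqup, hu, hXY, hlyv⟩
      · exact ⟨b, hgood, Or.inl ⟨.refl _, fun h => hqne h.1⟩⟩
      · cases b <;> simp only [bq, reduceCtorEq] at hXY
        case bG dl al =>
        have hu' : u = p ++ (symO :: symC :: dl.map cd) := by simpa [bp1] using hu
        have hlyv' : ca a :: v = al.map ca ++ q := by simpa [bp2] using hlyv
        cases al with
        | nil =>
          exfalso; rw [noCA_iff] at hq; exact hq a v (by simpa using hlyv'.symm)
        | cons a' al' =>
          simp only [List.map_cons, List.cons_append, List.cons.injEq] at hlyv'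
          obtain ⟨ha, hv⟩ := hlyv'
          obtain rfl : a = a' := by injection ha
          refine ⟨Blk.bG (dl ++ [a]) al', ⟨p, q, ?_, rfl, hq⟩,
            Or.inl ⟨rot_of_eq (by simp [phi]), by rintro ⟨-, l₀, hl₀⟩; simp at hl₀⟩⟩
          rw [hu', hv]; simp [bstr]
    -- rotD : G a → L a^C S
    · rcases skeleton (r := [symL, cc a, symS]) heq hq (lx := []) (X := symG) (ly := [ca a]) rfl rfl rfl (by simp [qb])
        (Or.inl rfl) (by intro z hz; simp at hz; subst hz; simp) (by simp [qb]) (by simp)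
        trivial with ⟨hgood, hqne⟩ | ⟨hqup, hu, hXY, hlyv⟩
      · exact ⟨b, hgood, Or.inl ⟨.refl _, fun h => hqne h.1⟩⟩
      · cases b <;> simp only [bq, reduceCtorEq] at hXY
        case bG dl al =>
        have hu' : u = p ++ (symO :: symC :: dl.map cd) := by simpa [bp1] using hu
        have hlyv' : ca a :: v = al.map ca ++ q := by simpa [bp2] using hlyv
        cases al with
        | nil =>
          exfalso; rw [noCA_iff] at hq; exact hq a v (by simpa using hlyv'.symm)
        | cons a' al' =>
          simp only [List.map_cons, List.cons_append, List.cons.injEq] at hlyv'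
          obtain ⟨ha, hv⟩ := hlyv'
          obtain rfl : a = a' := by injection ha
          refine ⟨Blk.bL [] dl a [] al', ⟨p, q, ?_, rfl, hq⟩, Or.inl ⟨?_,
            by rintro ⟨-, l₀, hl₀⟩; simp at hl₀⟩⟩
          · rw [hu', hv]; simp [bstr]
          · simpa [phi] using List.isRotated_append (l := dl) (l' := a :: al')
    -- rotE : G E → F E
    · rcases skeleton (r := [symF, symE]) heq hq (lx := []) (X := symG) (ly := [symE]) rfl rfl rfl (by simp [qb])
        (Or.inl rfl) (by intro z hz; simp at hz; subst hz; simp) (by simp [qb]) (by simp)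
        trivial with ⟨hgood, hqne⟩ | ⟨hqup, hu, hXY, hlyv⟩
      · exact ⟨b, hgood, Or.inl ⟨.refl _, fun h => hqne h.1⟩⟩
      · cases b <;> simp only [bq, reduceCtorEq] at hXY
        case bG dl al =>
        have hu' : u = p ++ (symO :: symC :: dl.map cd) := by simpa [bp1] using hu
        obtain ⟨rfl, hq2⟩ := head_not_ca (by simpa [bp2] using hlyv) (by simp)
        refine ⟨Blk.bF [] dl [], ⟨p, symE :: v, ?_, rfl, by rw [← hq2]; exact hq⟩,
          Or.inl ⟨rot_of_eq (by simp [phi]), by rintro ⟨-, l₀, hl₀⟩; simp at hl₀⟩⟩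
        rw [hu']; simp [bstr]
    -- rotF : d L c → L c d^B
    · rcases skeleton (r := [symL, cc c, cb d]) heq hq (lx := [cd d]) (X := symL) (ly := [cc c]) rfl rfl (by simp [qb])
        (by simp [qb]) (Or.inr ⟨cd d, rfl, Or.inl ⟨d, rfl⟩⟩)
        (by intro z hz; simp at hz; rcases hz with rfl | rfl <;> simp) (by simp [qb]) (by simp)
        trivial with ⟨hgood, hqne⟩ | ⟨hqup, hu, hXY, hlyv⟩
      · exact ⟨b, hgood, Or.inl ⟨.refl _, fun h => hqne h.1⟩⟩
      · cases b <;> simp only [bq, reduceCtorEq] at hXY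
        case bL el dl c' bl al =>
        have hu' : u ++ [cd d] = p ++ (symO :: el.map ce ++ symC :: dl.map cd) := by
          simpa [bp1] using hu
        rcases dl.eq_nil_or_concat with rfl | ⟨dl', d₀, rfl⟩
        · exfalso
          have := (peel_last hu' (w' := symO :: el.map ce) (z := symC) (by simp)).2
          exact absurd this (by simp)
        · rw [List.concat_eq_append] at *
          obtain ⟨hu'', hd⟩ := peel_last hu'
            (w' := symO :: el.map ce ++ symC :: dl'.map cd) (z := cd d₀) (by simp)
          obtain rfl : d = d₀ := by injection hd
          have hlyv' : cc c :: v = cc c' :: (bl.map cb ++ symS :: al.map ca ++ q) := by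
            simpa [bp2] using hlyv
          simp only [List.cons.injEq] at hlyv'
          obtain ⟨hc, hv⟩ := hlyv'
          obtain rfl : c = c' := by injection hc
          refine ⟨Blk.bL el dl' c (d :: bl) al, ⟨p, q, ?_, rfl, hq⟩, Or.inl ⟨?_,
            by rintro ⟨-, l₀, hl₀⟩; simp at hl₀⟩⟩
          · rw [hu'', hv]; simp [bstr]
          · simpa [phi, List.append_assoc] using
              List.isRotated_append (l := bl ++ el ++ c :: al ++ dl') (l' := [d])
    -- rotG : C L c → c^E C R
    · rcases skeleton (r := [ce c, symC, symR]) heq hq (lx := [symC]) (X := symL) (ly := [cc c]) rfl rfl (by simp [qb])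
        (by simp [qb]) (Or.inr ⟨symC, rfl, Or.inr (Or.inl rfl)⟩)
        (by intro z hz; simp at hz; rcases hz with rfl | rfl <;> simp) (by simp [qb]) (by simp)
        trivial with ⟨hgood, hqne⟩ | ⟨hqup, hu, hXY, hlyv⟩
      · exact ⟨b, hgood, Or.inl ⟨.refl _, fun h => hqne h.1⟩⟩
      · cases b <;> simp only [bq, reduceCtorEq] at hXY
        case bL el dl c' bl al =>
        have hu' : u ++ [symC] = p ++ (symO :: el.map ce ++ symC :: dl.map cd) := by
          simpa [bp1] using hu
        rcases dl.eq_nil_or_concat with rfl | ⟨dl', d₀, rfl⟩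
        · obtain ⟨hu'', -⟩ := peel_last hu' (w' := symO :: el.map ce) (z := symC) (by simp)
          have hlyv' : cc c :: v = cc c' :: (bl.map cb ++ symS :: al.map ca ++ q) := by
            simpa [bp2] using hlyv
          simp only [List.cons.injEq] at hlyv'
          obtain ⟨hc, hv⟩ := hlyv'
          obtain rfl : c = c' := by injection hc
          refine ⟨Blk.bR (el ++ [c]) [] bl al, ⟨p, q, ?_, rfl, hq⟩,
            Or.inl ⟨rot_of_eq (by simp [phi]), by rintro ⟨-, l₀, hl₀⟩; simp at hl₀⟩⟩
          rw [hu'', hv]; simp [bstr]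
        · exfalso
          rw [List.concat_eq_append] at hu'
          have := (peel_last hu'
            (w' := symO :: el.map ce ++ symC :: dl'.map cd) (z := cd d₀) (by simp)).2
          exact absurd this (by simp)
    -- rotH : R b → b^D R
    · rcases skeleton (r := [cd b₀, symR]) heq hq (lx := []) (X := symR) (ly := [cb b₀]) rfl rfl rfl (by simp [qb])
        (Or.inl rfl) (by intro z hz; simp at hz; subst hz; simp) (by simp [qb]) (by simp)
        trivial with ⟨hgood, hqne⟩ | ⟨hqup, hu, hXY, hlyv⟩
      · exact ⟨b, hgood, Or.inl ⟨.refl _, fun h => hqne h.1⟩⟩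
      · cases b <;> simp only [bq, reduceCtorEq] at hXY
        case bR el dl bl al =>
        have hu' : u = p ++ (symO :: el.map ce ++ symC :: dl.map cd) := by simpa [bp1] using hu
        have hlyv' : cb b₀ :: v = bl.map cb ++ symS :: al.map ca ++ q := by
          simpa [bp2] using hlyv
        cases bl with
        | nil => exfalso; simp at hlyv'
        | cons b₁ bl' =>
          simp only [List.map_cons, List.cons_append, List.cons.injEq] at hlyv'
          obtain ⟨hb, hv⟩ := hlyv'
          obtain rfl : b₀ = b₁ := by injection hb
          refine ⟨Blk.bR el (dl ++ [b₀]) bl' al, ⟨p, q, ?_, rfl, hq⟩, Or.inl ⟨?_,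
            by rintro ⟨-, l₀, hl₀⟩; simp at hl₀⟩⟩
          · rw [hu', hv]; simp [bstr]
          · simpa [phi, List.append_assoc] using
              List.isRotated_append (l := [b₀]) (l' := bl' ++ el ++ al ++ dl)
    -- rotI : R S a → L a^C S
    · rcases skeleton (r := [symL, cc a, symS]) heq hq (lx := []) (X := symR) (ly := [symS, ca a]) rfl rfl rfl
        (by simp [qb]) (Or.inl rfl)
        (by intro z hz; simp at hz; rcases hz with rfl | rfl <;> simp) (by simp [qb]) (by simp)
        trivial with ⟨hgood, hqne⟩ | ⟨hqup, hu, hXY, hlyv⟩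
      · exact ⟨b, hgood, Or.inl ⟨.refl _, fun h => hqne h.1⟩⟩
      · cases b <;> simp only [bq, reduceCtorEq] at hXY
        case bR el dl bl al =>
        have hu' : u = p ++ (symO :: el.map ce ++ symC :: dl.map cd) := by simpa [bp1] using hu
        have hlyv' : symS :: ca a :: v = bl.map cb ++ symS :: al.map ca ++ q := by
          simpa [bp2] using hlyv
        cases bl with
        | cons b₁ bl' => exfalso; simp at hlyv'
        | nil =>
          have hlyv'' : ca a :: v = al.map ca ++ q := by simpa using hlyv'
          cases al with
          | nil =>
            exfalso; rw [noCA_iff] at hq; exact hq a v (by simpa using hlyv''.symm)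
          | cons a' al' =>
            simp only [List.map_cons, List.cons_append, List.cons.injEq] at hlyv''
            obtain ⟨ha, hv⟩ := hlyv''
            obtain rfl : a = a' := by injection ha
            refine ⟨Blk.bL el dl a [] al', ⟨p, q, ?_, rfl, hq⟩,
              Or.inl ⟨rot_of_eq (by simp [phi]), by rintro ⟨-, l₀, hl₀⟩; simp at hl₀⟩⟩
            rw [hu', hv]; simp [bstr]
    -- rotJ : R S E → F E
    · rcases skeleton (r := [symF, symE]) heq hq (lx := []) (X := symR) (ly := [symS, symE]) rfl rfl rfl
        (by simp [qb]) (Or.inl rfl)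
        (by intro z hz; simp at hz; rcases hz with rfl | rfl <;> simp) (by simp [qb]) (by simp)
        trivial with ⟨hgood, hqne⟩ | ⟨hqup, hu, hXY, hlyv⟩
      · exact ⟨b, hgood, Or.inl ⟨.refl _, fun h => hqne h.1⟩⟩
      · cases b <;> simp only [bq, reduceCtorEq] at hXY
        case bR el dl bl al =>
        have hu' : u = p ++ (symO :: el.map ce ++ symC :: dl.map cd) := by simpa [bp1] using hu
        have hlyv' : symS :: symE :: v = bl.map cb ++ symS :: al.map ca ++ q := by
          simpa [bp2] using hlyv
        cases bl with
        | cons b₁ bl' => exfalso; simp at hlyv'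
        | nil =>
          have hlyv'' : symE :: v = al.map ca ++ q := by simpa using hlyv'
          obtain ⟨rfl, hq2⟩ := head_not_ca hlyv'' (by simp)
          refine ⟨Blk.bF el dl [], ⟨p, symE :: v, ?_, rfl, by rw [← hq2]; exact hq⟩,
            Or.inl ⟨rot_of_eq (by simp [phi]), by rintro ⟨-, l₀, hl₀⟩; simp at hl₀⟩⟩
          rw [hu']; simp [bstr]
    -- rotK : d F → F d^A
    · rcases skeleton (r := [symF, ca d]) heq hq (lx := [cd d]) (X := symF) (ly := []) rfl rfl (by simp [qb])
        (by simp [qb]) (Or.inr ⟨cd d, rfl, Or.inl ⟨d, rfl⟩⟩)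
        (by intro z hz; simp at hz; subst hz; simp) (by simp [qb]) (by simp)
        trivial with ⟨hgood, hqne⟩ | ⟨hqup, hu, hXY, hlyv⟩
      · exact ⟨b, hgood, Or.inl ⟨.refl _, fun h => hqne h.1⟩⟩
      · cases b <;> simp only [bq, reduceCtorEq] at hXY
        case bF el dl al =>
        have hu' : u ++ [cd d] = p ++ (symO :: el.map ce ++ symC :: dl.map cd) := by
          simpa [bp1] using hu
        rcases dl.eq_nil_or_concat with rfl | ⟨dl', d₀, rfl⟩
        · exfalso
          have := (peel_last hu' (w' := symO :: el.map ce) (z := symC) (by simp)).2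
          exact absurd this (by simp)
        · rw [List.concat_eq_append] at *
          obtain ⟨hu'', hd⟩ := peel_last hu'
            (w' := symO :: el.map ce ++ symC :: dl'.map cd) (z := cd d₀) (by simp)
          obtain rfl : d = d₀ := by injection hd
          have hv : v = al.map ca ++ q := by simpa [bp2] using hlyv
          refine ⟨Blk.bF el dl' (d :: al), ⟨p, q, ?_, rfl, hq⟩,
            Or.inl ⟨rot_of_eq (by simp [phi]), by rintro ⟨-, l₀, hl₀⟩; simp at hl₀⟩⟩
          rw [hu'', hv]; simp [bstr]
    -- rotL : C F → f
    · rcases skeleton (r := [symf]) heq hq (lx := [symC]) (X := symF) (ly := []) rfl rfl (by simp [qb])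
        (by simp [qb]) (Or.inr ⟨symC, rfl, Or.inr (Or.inl rfl)⟩)
        (by intro z hz; simp at hz; subst hz; simp) (by simp [qb]) (by simp)
        trivial with ⟨hgood, hqne⟩ | ⟨hqup, hu, hXY, hlyv⟩
      · exact ⟨b, hgood, Or.inl ⟨.refl _, fun h => hqne h.1⟩⟩
      · cases b <;> simp only [bq, reduceCtorEq] at hXY
        case bF el dl al =>
        have hu' : u ++ [symC] = p ++ (symO :: el.map ce ++ symC :: dl.map cd) := by
          simpa [bp1] using hu
        rcases dl.eq_nil_or_concat with rfl | ⟨dl', d₀, rfl⟩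
        · obtain ⟨hu'', -⟩ := peel_last hu' (w' := symO :: el.map ce) (z := symC) (by simp)
          have hv : v = al.map ca ++ q := by simpa [bp2] using hlyv
          refine ⟨Blk.bf el al, ⟨p, q, ?_, rfl, hq⟩,
            Or.inl ⟨rot_of_eq (by simp [phi]), by rintro ⟨-, l₀, hl₀⟩; simp at hl₀⟩⟩
          rw [hu'', hv]; simp [bstr]
        · exfalso
          rw [List.concat_eq_append] at hu'
          have := (peel_last hu'
            (w' := symO :: el.map ce ++ symC :: dl'.map cd) (z := cd d₀) (by simp)).2
          exact absurd this (by simp)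
    -- rotM : e f → f e^A
    · rcases skeleton (r := [symf, ca e]) heq hq (lx := [ce e]) (X := symf) (ly := []) rfl rfl (by simp [qb])
        (by simp [qb]) (Or.inr ⟨ce e, rfl, Or.inr (Or.inr (Or.inl ⟨e, rfl⟩))⟩)
        (by intro z hz; simp at hz; subst hz; simp) (by simp [qb]) (by simp)
        trivial with ⟨hgood, hqne⟩ | ⟨hqup, hu, hXY, hlyv⟩
      · exact ⟨b, hgood, Or.inl ⟨.refl _, fun h => hqne h.1⟩⟩
      · cases b <;> simp only [bq, reduceCtorEq] at hXY
        case bf el al =>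
        have hu' : u ++ [ce e] = p ++ (symO :: el.map ce) := by simpa [bp1] using hu
        rcases el.eq_nil_or_concat with rfl | ⟨el', e₀, rfl⟩
        · exfalso
          have := (snoc_eq_snoc (x := u) (y := p) (a := ce e) (b := symO) (by simpa using hu')).2
          exact absurd this (by simp)
        · rw [List.concat_eq_append] at *
          obtain ⟨hu'', he⟩ := peel_last hu' (w' := symO :: el'.map ce) (z := ce e₀) (by simp)
          obtain rfl : e = e₀ := by injection he
          have hv : v = al.map ca ++ q := by simpa [bp2] using hlyv
          refine ⟨Blk.bf el' (e :: al), ⟨p, q, ?_, rfl, hq⟩,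
            Or.inl ⟨rot_of_eq (by simp [phi]), by rintro ⟨-, l₀, hl₀⟩; simp at hl₀⟩⟩
          rw [hu'', hv]; simp [bstr]
    -- rotN : O f → W
    · rcases skeleton (r := [symW]) heq hq (lx := [symO]) (X := symf) (ly := []) rfl rfl (by simp [qb])
        (by simp [qb]) (Or.inr ⟨symO, rfl, Or.inr (Or.inr (Or.inr rfl))⟩)
        (by intro z hz; simp at hz; subst hz; simp) (by simp [qb]) (by simp)
        trivial with ⟨hgood, hqne⟩ | ⟨hqup, hu, hXY, hlyv⟩
      · exact ⟨b, hgood, Or.inl ⟨.refl _, fun h => hqne h.1⟩⟩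
      · cases b <;> simp only [bq, reduceCtorEq] at hXY
        case bf el al =>
        have hu' : u ++ [symO] = p ++ (symO :: el.map ce) := by simpa [bp1] using hu
        rcases el.eq_nil_or_concat with rfl | ⟨el', e₀, rfl⟩
        · obtain ⟨hu'', -⟩ := snoc_eq_snoc (by simpa using hu' :
            u ++ [symO] = p ++ [symO])
          have hv : v = al.map ca ++ q := by simpa [bp2] using hlyv
          refine ⟨Blk.bW al, ⟨p, q, ?_, rfl, hq⟩,
            Or.inl ⟨rot_of_eq (by simp [phi]), by rintro ⟨-, l₀, hl₀⟩; simp at hl₀⟩⟩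
          rw [hu'', hv]; simp [bstr]
        · exfalso
          rw [List.concat_eq_append] at hu'
          have := (peel_last hu' (w' := symO :: el'.map ce) (z := ce e₀) (by simp)).2
          exact absurd this (by simp)
  -- the W l → B r rules
  · rw [Prod.mk.injEq] at h; obtain ⟨rfl, rfl⟩ := h
    rcases skeleton (r := symB :: r₀.map ca) heq hq (lx := []) (X := symW) (ly := l₀.map ca) rfl rfl rfl (by simp)
      (Or.inl rfl)
      (by intro z hz; simp only [List.tail_cons, List.mem_map] at hz
          obtain ⟨a, -, rfl⟩ := hz; simp)
      (by simp [qb]) (by simp) trivial with ⟨hgood, hqne⟩ | ⟨hqup, hu, hXY, hlyv⟩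
    · exact ⟨b, hgood, Or.inl ⟨.refl _, fun h => hqne h.1⟩⟩
    · cases b <;> simp only [bq, reduceCtorEq] at hXY
      case bW al =>
      have hu' : u = p := by simpa [bp1] using hu
      have hlyv' : l₀.map ca ++ v = al.map ca ++ q := by simpa [bp2] using hlyv
      obtain ⟨al', rfl, hv⟩ := ca_prefix_peel hlyv' hq
      refine ⟨Blk.bB (r₀ ++ al'), ⟨p, q, ?_, rfl, hq⟩, Or.inr ?_⟩
      · rw [hu', hv]; simp [bstr]
      · exact ⟨l₀, r₀, al', rfl, rfl, sim_refl _, sim_refl _⟩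

end Dev6
section Dev7
open RotSym List Relation

variable {α : Type*}

local notation "Sym" => RotSym α
local notation "RT" => ReflTransGen (Step (rotSRS α))

theorem memA : (([symB, symE], [symW, symE]) : List Sym × List Sym) ∈ rotSRS α :=
  Or.inl rfl
theorem memB (a : α) : (([symB, ca a], [symO, symC, cd a, symG]) : List Sym × List Sym) ∈ rotSRS α :=
  Or.inr (Or.inl ⟨a, rfl⟩)
theorem memC (a : α) : (([symG, ca a], [cd a, symG]) : List Sym × List Sym) ∈ rotSRS α :=
  Or.inr (Or.inr (Or.inl ⟨a, rfl⟩))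
theorem memD (a : α) : (([symG, ca a], [symL, cc a, symS]) : List Sym × List Sym) ∈ rotSRS α :=
  Or.inr (Or.inr (Or.inr (Or.inl ⟨a, rfl⟩)))
theorem memE : (([symG, symE], [symF, symE]) : List Sym × List Sym) ∈ rotSRS α :=
  Or.inr (Or.inr (Or.inr (Or.inr (Or.inl rfl))))
theorem memF (c d : α) : (([cd d, symL, cc c], [symL, cc c, cb d]) : List Sym × List Sym) ∈ rotSRS α :=
  Or.inr (Or.inr (Or.inr (Or.inr (Or.inr (Or.inl ⟨c, d, rfl⟩)))))
theorem memG (c : α) : (([symC, symL, cc c], [ce c, symC, symR]) : List Sym × List Sym) ∈ rotSRS α :=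
  Or.inr (Or.inr (Or.inr (Or.inr (Or.inr (Or.inr (Or.inl ⟨c, rfl⟩))))))
theorem memH (b : α) : (([symR, cb b], [cd b, symR]) : List Sym × List Sym) ∈ rotSRS α :=
  Or.inr (Or.inr (Or.inr (Or.inr (Or.inr (Or.inr (Or.inr (Or.inl ⟨b, rfl⟩)))))))
theorem memI (a : α) : (([symR, symS, ca a], [symL, cc a, symS]) : List Sym × List Sym) ∈ rotSRS α :=
  Or.inr (Or.inr (Or.inr (Or.inr (Or.inr (Or.inr (Or.inr (Or.inr (Or.inl ⟨a, rfl⟩))))))))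
theorem memJ : (([symR, symS, symE], [symF, symE]) : List Sym × List Sym) ∈ rotSRS α :=
  Or.inr (Or.inr (Or.inr (Or.inr (Or.inr (Or.inr (Or.inr (Or.inr (Or.inr (Or.inl rfl)))))))))
theorem memK (d : α) : (([cd d, symF], [symF, ca d]) : List Sym × List Sym) ∈ rotSRS α :=
  Or.inr (Or.inr (Or.inr (Or.inr (Or.inr (Or.inr (Or.inr (Or.inr (Or.inr (Or.inr (Or.inl ⟨d, rfl⟩))))))))))
theorem memL : (([symC, symF], [symf]) : List Sym × List Sym) ∈ rotSRS α :=
  Or.inr (Or.inr (Or.inr (Or.inr (Or.inr (Or.inr (Or.inr (Or.inr (Or.inr (Or.inr (Or.inr (Or.inl rfl)))))))))))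
theorem memM (e : α) : (([ce e, symf], [symf, ca e]) : List Sym × List Sym) ∈ rotSRS α :=
  Or.inr (Or.inr (Or.inr (Or.inr (Or.inr (Or.inr (Or.inr (Or.inr (Or.inr (Or.inr (Or.inr (Or.inr (Or.inl ⟨e, rfl⟩))))))))))))
theorem memN : (([symO, symf], [symW]) : List Sym × List Sym) ∈ rotSRS α :=
  Or.inr (Or.inr (Or.inr (Or.inr (Or.inr (Or.inr (Or.inr (Or.inr (Or.inr (Or.inr (Or.inr (Or.inr (Or.inr rfl))))))))))))

/-- equality into RT -/
theorem rt_of_eq {x y : List Sym} (h : x = y) : RT x y := h ▸ .refl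

theorem rt_step {l r : List Sym} (h : (l, r) ∈ rotSRS α) {x y : List Sym} (u v : List Sym)
    (hx : x = u ++ l ++ v) (hy : y = u ++ r ++ v) : RT x y := by
  subst hx hy; exact ReflTransGen.single (step_intro h u v)

/-- rotC loop -/
theorem loopC (z : List α) : ∀ u v : List Sym,
    RT (u ++ [symG] ++ z.map ca ++ v) (u ++ z.map cd ++ [symG] ++ v) := by
  induction z with
  | nil => intro u v; exact rt_of_eq (by simp)
  | cons a z ih =>
    intro u v
    refine ReflTransGen.trans
      (rt_step (memC a) u (z.map ca ++ v) (by simp) rfl) ?_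
    refine ReflTransGen.trans (by simpa using ih (u ++ [cd a]) v) (rt_of_eq (by simp))

/-- rotF loop -/
theorem loopF (z : List α) (c : α) : ∀ u v : List Sym,
    RT (u ++ z.map cd ++ [symL, cc c] ++ v) (u ++ [symL, cc c] ++ z.map cb ++ v) := by
  induction z using List.reverseRecOn with
  | nil => intro u v; exact rt_of_eq (by simp)
  | append_singleton z d ih =>
    intro u v
    refine ReflTransGen.trans
      (rt_step (memF c d) (u ++ z.map cd) v (by simp) rfl) ?_
    refine ReflTransGen.trans (by simpa using ih u (cb d :: v)) (rt_of_eq (by simp))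

/-- rotH loop -/
theorem loopH (z : List α) : ∀ u v : List Sym,
    RT (u ++ [symR] ++ z.map cb ++ v) (u ++ z.map cd ++ [symR] ++ v) := by
  induction z with
  | nil => intro u v; exact rt_of_eq (by simp)
  | cons b z ih =>
    intro u v
    refine ReflTransGen.trans
      (rt_step (memH b) u (z.map cb ++ v) (by simp) rfl) ?_
    refine ReflTransGen.trans (by simpa using ih (u ++ [cd b]) v) (rt_of_eq (by simp))

/-- rotK loop -/
theorem loopK (z : List α) : ∀ u v : List Sym,
    RT (u ++ z.map cd ++ [symF] ++ v) (u ++ [symF] ++ z.map ca ++ v) := by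
  induction z using List.reverseRecOn with
  | nil => intro u v; exact rt_of_eq (by simp)
  | append_singleton z d ih =>
    intro u v
    refine ReflTransGen.trans
      (rt_step (memK d) (u ++ z.map cd) v (by simp) rfl) ?_
    refine ReflTransGen.trans (by simpa using ih u (ca d :: v)) (rt_of_eq (by simp))

/-- rotM loop -/
theorem loopM (z : List α) : ∀ u v : List Sym,
    RT (u ++ z.map ce ++ [symf] ++ v) (u ++ [symf] ++ z.map ca ++ v) := by
  induction z using List.reverseRecOn with
  | nil => intro u v; exact rt_of_eq (by simp)
  | append_singleton z e ih =>
    intro u v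
    refine ReflTransGen.trans
      (rt_step (memM e) (u ++ z.map ce) v (by simp) rfl) ?_
    refine ReflTransGen.trans (by simpa using ih u (ca e :: v)) (rt_of_eq (by simp))

theorem rt_congr {x x' y y' : List Sym} (h : RT x' y') (hx : x = x') (hy : y = y') :
    RT x y := by subst hx hy; exact h

/-- finishing path from the `F` state -/
theorem pathF (el dl : List α) :
    RT (symO :: el.map ce ++ [symC] ++ dl.map cd ++ [symF, symE])
       (symW :: (el ++ dl).map ca ++ [symE]) := by
  have s1 : RT (symO :: el.map ce ++ [symC] ++ dl.map cd ++ [symF, symE])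
      (symO :: el.map ce ++ [symC, symF] ++ dl.map ca ++ [symE]) :=
    rt_congr (loopK dl (symO :: el.map ce ++ [symC]) [symE]) (by simp) (by simp)
  have s2 : RT (symO :: el.map ce ++ [symC, symF] ++ dl.map ca ++ [symE])
      (symO :: el.map ce ++ [symf] ++ dl.map ca ++ [symE]) :=
    rt_step memL (symO :: el.map ce) (dl.map ca ++ [symE]) (by simp) (by simp)
  have s3 : RT (symO :: el.map ce ++ [symf] ++ dl.map ca ++ [symE])
      ([symO, symf] ++ el.map ca ++ dl.map ca ++ [symE]) :=
    rt_congr (loopM el [symO] (dl.map ca ++ [symE])) (by simp) (by simp)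
  have s4 : RT ([symO, symf] ++ el.map ca ++ dl.map ca ++ [symE])
      (symW :: (el ++ dl).map ca ++ [symE]) :=
    rt_step memN [] (el.map ca ++ dl.map ca ++ [symE]) (by simp) (by simp)
  exact ((s1.trans s2).trans s3).trans s4

/-- main loop from the `R S` state -/
theorem pathRS (rest : List α) : ∀ el dl : List α,
    RT (symO :: el.map ce ++ [symC] ++ dl.map cd ++ [symR, symS] ++ rest.map ca ++ [symE])
       (symW :: (el ++ rest ++ dl).map ca ++ [symE]) := by
  induction rest with
  | nil =>
    intro el dl
    have s1 : RT (symO :: el.map ce ++ [symC] ++ dl.map cd ++ [symR, symS] ++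
          List.map ca [] ++ [symE])
        (symO :: el.map ce ++ [symC] ++ dl.map cd ++ [symF, symE]) :=
      rt_step memJ (symO :: el.map ce ++ [symC] ++ dl.map cd) [] (by simp) (by simp)
    exact s1.trans (rt_congr (pathF el dl) rfl (by simp))
  | cons c rest ih =>
    intro el dl
    have s1 : RT (symO :: el.map ce ++ [symC] ++ dl.map cd ++ [symR, symS] ++
          (c :: rest).map ca ++ [symE])
        (symO :: el.map ce ++ [symC] ++ dl.map cd ++ [symL, cc c, symS] ++
          rest.map ca ++ [symE]) :=
      rt_step (memI c) (symO :: el.map ce ++ [symC] ++ dl.map cd)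
        (rest.map ca ++ [symE]) (by simp) (by simp)
    have s2 : RT (symO :: el.map ce ++ [symC] ++ dl.map cd ++ [symL, cc c, symS] ++
          rest.map ca ++ [symE])
        (symO :: el.map ce ++ [symC, symL, cc c] ++ dl.map cb ++ [symS] ++
          rest.map ca ++ [symE]) :=
      rt_congr (loopF dl c (symO :: el.map ce ++ [symC])
        ([symS] ++ rest.map ca ++ [symE])) (by simp) (by simp)
    have s3 : RT (symO :: el.map ce ++ [symC, symL, cc c] ++ dl.map cb ++ [symS] ++
          rest.map ca ++ [symE])
        (symO :: el.map ce ++ [ce c, symC, symR] ++ dl.map cb ++ [symS] ++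
          rest.map ca ++ [symE]) :=
      rt_step (memG c) (symO :: el.map ce)
        (dl.map cb ++ [symS] ++ rest.map ca ++ [symE]) (by simp) (by simp)
    have s4 : RT (symO :: el.map ce ++ [ce c, symC, symR] ++ dl.map cb ++ [symS] ++
          rest.map ca ++ [symE])
        (symO :: (el ++ [c]).map ce ++ [symC] ++ dl.map cd ++ [symR, symS] ++
          rest.map ca ++ [symE]) :=
      rt_congr (loopH dl (symO :: el.map ce ++ [ce c, symC])
        ([symS] ++ rest.map ca ++ [symE])) (by simp) (by simp)
    exact (((s1.trans s2).trans s3).trans s4).trans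
      (rt_congr (ih (el ++ [c]) dl) rfl (by simp))

/-- the rotation machine: from `B x E` one can reach `W y E` for any rotation `y` of `x` -/
theorem machine {x y : List α} (hsim : Sim x y) :
    RT (symB :: x.map ca ++ [symE]) (symW :: y.map ca ++ [symE]) := by
  obtain ⟨w₁, w₂, rfl, rfl⟩ := hsim
  cases w₁ with
  | nil =>
    cases w₂ with
    | nil => exact rt_step memA [] [] (by simp) (by simp)
    | cons c rest =>
      have s1 : RT (symB :: (([] : List α) ++ c :: rest).map ca ++ [symE])
          ([symO, symC, cd c, symG] ++ rest.map ca ++ [symE]) :=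
        rt_step (memB c) [] (rest.map ca ++ [symE]) (by simp) (by simp)
      have s2 : RT ([symO, symC, cd c, symG] ++ rest.map ca ++ [symE])
          ([symO, symC, cd c] ++ rest.map cd ++ [symG, symE]) :=
        rt_congr (loopC rest [symO, symC, cd c] [symE]) (by simp) (by simp)
      have s3 : RT ([symO, symC, cd c] ++ rest.map cd ++ [symG, symE])
          (symO :: List.map ce [] ++ [symC] ++ (c :: rest).map cd ++ [symF, symE]) :=
        rt_step memE ([symO, symC, cd c] ++ rest.map cd) [] (by simp) (by simp)
      exact ((s1.trans s2).trans s3).trans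
        (rt_congr (pathF [] (c :: rest)) rfl (by simp))
  | cons a w₁ =>
    have s1 : RT (symB :: ((a :: w₁) ++ w₂).map ca ++ [symE])
        ([symO, symC, cd a, symG] ++ (w₁ ++ w₂).map ca ++ [symE]) :=
      rt_step (memB a) [] ((w₁ ++ w₂).map ca ++ [symE]) (by simp) (by simp)
    have s2 : RT ([symO, symC, cd a, symG] ++ (w₁ ++ w₂).map ca ++ [symE])
        ([symO, symC, cd a] ++ w₁.map cd ++ [symG] ++ w₂.map ca ++ [symE]) :=
      rt_congr (loopC w₁ [symO, symC, cd a] (w₂.map ca ++ [symE])) (by simp) (by simp)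
    refine (s1.trans s2).trans ?_
    cases w₂ with
    | nil =>
      have s3 : RT ([symO, symC, cd a] ++ w₁.map cd ++ [symG] ++ List.map ca [] ++ [symE])
          (symO :: List.map ce [] ++ [symC] ++ (a :: w₁).map cd ++ [symF, symE]) :=
        rt_step memE ([symO, symC, cd a] ++ w₁.map cd) [] (by simp) (by simp)
      exact s3.trans (rt_congr (pathF [] (a :: w₁)) rfl (by simp))
    | cons c w₂' =>
      have s3 : RT ([symO, symC, cd a] ++ w₁.map cd ++ [symG] ++ (c :: w₂').map ca ++ [symE])
          ([symO, symC] ++ (a :: w₁).map cd ++ [symL, cc c, symS] ++ w₂'.map ca ++ [symE]) :=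
        rt_step (memD c) ([symO, symC] ++ (a :: w₁).map cd)
          (w₂'.map ca ++ [symE]) (by simp) (by simp)
      have s4 : RT ([symO, symC] ++ (a :: w₁).map cd ++ [symL, cc c, symS] ++
            w₂'.map ca ++ [symE])
          ([symO, symC, symL, cc c] ++ (a :: w₁).map cb ++ [symS] ++ w₂'.map ca ++ [symE]) :=
        rt_congr (loopF (a :: w₁) c [symO, symC] ([symS] ++ w₂'.map ca ++ [symE]))
          (by simp) (by simp)
      have s5 : RT ([symO, symC, symL, cc c] ++ (a :: w₁).map cb ++ [symS] ++
            w₂'.map ca ++ [symE])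
          ([symO, ce c, symC, symR] ++ (a :: w₁).map cb ++ [symS] ++ w₂'.map ca ++ [symE]) :=
        rt_step (memG c) [symO] ((a :: w₁).map cb ++ [symS] ++ w₂'.map ca ++ [symE])
          (by simp) (by simp)
      have s6 : RT ([symO, ce c, symC, symR] ++ (a :: w₁).map cb ++ [symS] ++
            w₂'.map ca ++ [symE])
          (symO :: List.map ce [c] ++ [symC] ++ (a :: w₁).map cd ++ [symR, symS] ++
            w₂'.map ca ++ [symE]) :=
        rt_congr (loopH (a :: w₁) [symO, ce c, symC] ([symS] ++ w₂'.map ca ++ [symE]))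
          (by simp) (by simp)
      exact (((s3.trans s4).trans s5).trans s6).trans
        (rt_congr (pathRS w₂' [c] (a :: w₁)) rfl (by simp))

end Dev7
section Dev8
open List

variable {β : Type*} (step : β → β → Prop) (ch : ℕ → List β) (dflt : β)

/-- chunk-walking machine -/
def go (ch : ℕ → List β) : ℕ → ℕ × ℕ
  | 0 => (0, 0)
  | k + 1 =>
      let p := go ch k
      if p.2 + 1 < (ch p.1).length then (p.1, p.2 + 1) else (p.1 + 1, 0)

/-- cumulative start positions -/
def KK (ch : ℕ → List β) : ℕ → ℕ
  | 0 => 0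
  | n + 1 => KK ch n + (ch n).length

theorem go_inv (hne : ∀ n, ch n ≠ []) : ∀ k, (go ch k).2 < (ch (go ch k).1).length := by
  intro k
  induction k with
  | zero => simpa [go] using List.length_pos_iff.2 (hne 0)
  | succ k ih =>
    by_cases h : (go ch k).2 + 1 < (ch (go ch k).1).length
    · simp [go, h]
    · simp [go, h]
      exact List.length_pos_iff.2 (hne _)

theorem go_K (hne : ∀ n, ch n ≠ []) : ∀ n j, j < (ch n).length → go ch (KK ch n + j) = (n, j) := by
  have main : ∀ n, go ch (KK ch n) = (n, 0) → ∀ j, j < (ch n).length →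
      go ch (KK ch n + j) = (n, j) := by
    intro n h0 j
    induction j with
    | zero => intro _; simpa using h0
    | succ j ih =>
      intro hj
      have hgo : go ch (KK ch n + j) = (n, j) := ih (Nat.lt_of_succ_lt hj)
      show go ch (KK ch n + j + 1) = (n, j + 1)
      rw [go]
      simp [hgo, hj]
  have base : ∀ n, go ch (KK ch n) = (n, 0) := by
    intro n
    induction n with
    | zero => simp [go, KK]
    | succ n ih =>
      have hlen := List.length_pos_iff.2 (hne n)
      have hlast : go ch (KK ch n + ((ch n).length - 1)) = (n, (ch n).length - 1) :=
        main n ih _ (by omega)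
      have : KK ch (n + 1) = (KK ch n + ((ch n).length - 1)) + 1 := by
        simp [KK]; omega
      rw [this, go]
      simp [hlast]
      omega
  exact fun n => main n (base n)

/-- the flattened sequence -/
def gseq (k : ℕ) : β := (ch (go ch k).1).getD (go ch k).2 dflt

theorem gseq_step (hne : ∀ n, ch n ≠ [])
    (hchain : ∀ n, List.Chain' step (ch n ++ [(ch (n + 1)).getD 0 dflt])) :
    ∀ k, step (gseq ch dflt k) (gseq ch dflt (k + 1)) := by
  intro k
  have hinv := go_inv ch hne k
  set n := (go ch k).1 with hn
  set j := (go ch k).2 with hj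
  have hch := hchain n
  replace hch := List.isChain_iff_getElem.1 hch
  have hlen0 := List.length_pos_iff.2 (hne (n + 1))
  by_cases h : j + 1 < (ch n).length
  · have hgo1 : go ch (k + 1) = (n, j + 1) := by rw [go]; simp [← hn, ← hj, h]
    have hst := hch j (by simp; omega)
    unfold gseq
    rw [hgo1, ← hn, ← hj]
    rw [List.getElem_append_left (by omega), List.getElem_append_left (by omega)] at hst
    rwa [List.getD_eq_getElem _ _ hinv, List.getD_eq_getElem _ _ h]
  · have hj1 : j + 1 = (ch n).length := by omega
    have hgo1 : go ch (k + 1) = (n + 1, 0) := by rw [go]; simp [← hn, ← hj, h]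
    have hst := hch j (by simp; omega)
    unfold gseq
    rw [hgo1, ← hn, ← hj]
    rw [List.getElem_append_left (by omega)] at hst
    rw [List.getElem_append_right (by omega)] at hst
    simp only [hj1] at hst
    simp only [Nat.sub_self, List.getElem_cons_zero] at hst
    rw [List.getD_eq_getElem _ _ hinv, List.getD_eq_getElem _ _ hlen0]
    rwa [List.getD_eq_getElem _ _ hlen0] at hst

theorem gseq_at (hne : ∀ n, ch n ≠ []) (n j : ℕ) (hj : j < (ch n).length) :
    gseq ch dflt (KK ch n + j) = (ch n).getD j dflt := by
  unfold gseq
  rw [go_K ch hne n j hj]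

theorem KK_mono (hne : ∀ n, ch n ≠ []) : StrictMono (KK ch) := by
  have : ∀ n, KK ch n < KK ch (n + 1) := by
    intro n
    have := List.length_pos_iff.2 (hne n)
    simp [KK]; omega
  exact strictMono_nat_of_lt_succ this

end Dev8
section Dev9
open RotSym List Relation

variable {α : Type*}

local notation "Sym" => RotSym α

theorem completeness {S R : Set (List α × List α)} (hSR : S ⊆ R)
    (h : ¬ RelTerminating (CycleStep S) (CycleStep R)) :
    ¬ RelTerminating
        (Step { p : List (RotSym α) × List (RotSym α) |
                  ∃ l r, (l, r) ∈ S ∧ p = (symW :: l.map ca, symB :: r.map ca) })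
        (Step (rotateSRS R)) := by
  rw [RelTerminating, not_not] at h ⊢
  obtain ⟨f, hstep, hinf⟩ := h
  have hwit : ∀ n, ∃ lrw : List α × List α × List α,
      (lrw.1, lrw.2.1) ∈ R ∧ Sim (lrw.1 ++ lrw.2.2) (f n) ∧
      Sim (lrw.2.1 ++ lrw.2.2) (f (n + 1)) ∧
      (CycleStep S (f n) (f (n + 1)) → (lrw.1, lrw.2.1) ∈ S) := by
    intro n
    by_cases hn : CycleStep S (f n) (f (n + 1))
    · obtain ⟨l, r, w, hmem, h1, h2⟩ := hn
      exact ⟨(l, r, w), hSR hmem, h1, h2, fun _ => hmem⟩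
    · obtain ⟨l, r, w, hmem, h1, h2⟩ := hstep n
      exact ⟨(l, r, w), hmem, h1, h2, fun hc => absurd hc hn⟩
  choose lrw hmem hsim1 hsim2 hSwit using hwit
  set Wstr : ℕ → List Sym :=
    fun n => symW :: ((lrw n).1 ++ (lrw n).2.2).map ca ++ [symE] with hWstr
  set Bstr : ℕ → List Sym :=
    fun n => symB :: ((lrw n).2.1 ++ (lrw n).2.2).map ca ++ [symE] with hBstr
  have step0 : ∀ n, Step (rotateSRS R) (Wstr n) (Bstr n) := by
    intro n
    exact ⟨[], ((lrw n).2.2).map ca ++ [symE], symW :: ((lrw n).1).map ca,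
      symB :: ((lrw n).2.1).map ca,
      Or.inr ⟨(lrw n).1, (lrw n).2.1, hmem n, rfl⟩, by simp [hWstr], by simp [hBstr]⟩
  have stepS : ∀ n, CycleStep S (f n) (f (n + 1)) →
      Step { p : List Sym × List Sym |
              ∃ l r, (l, r) ∈ S ∧ p = (symW :: l.map ca, symB :: r.map ca) }
        (Wstr n) (Bstr n) := by
    intro n hn
    exact ⟨[], ((lrw n).2.2).map ca ++ [symE], symW :: ((lrw n).1).map ca,
      symB :: ((lrw n).2.1).map ca,
      ⟨(lrw n).1, (lrw n).2.1, hSwit n hn, rfl⟩, by simp [hWstr], by simp [hBstr]⟩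
  have hmach : ∀ n, ReflTransGen (Step (rotSRS α)) (Bstr n) (Wstr (n + 1)) := by
    intro n
    apply machine
    rw [sim_iff_isRotated]
    exact (sim_iff_isRotated.1 (hsim2 n)).trans
      (sim_iff_isRotated.1 (hsim1 (n + 1))).symm
  have hpl : ∀ n, ∃ pl, List.Chain (Step (rotSRS α)) (Bstr n) pl ∧
      (Bstr n :: pl).getLast (by simp) = Wstr (n + 1) :=
    fun n => List.exists_isChain_cons_of_relationReflTransGen (hmach n)
  choose pl hplc hpll using hpl
  set chunk : ℕ → List (List Sym) :=
    fun n => Wstr n :: List.dropLast (Bstr n :: pl n) with hchunk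
  have hne : ∀ n, chunk n ≠ [] := fun n => by simp [hchunk]
  have hhead : ∀ n, (chunk n).getD 0 [] = Wstr n := fun n => by simp [hchunk]
  have hfull : ∀ n, chunk n ++ [(chunk (n + 1)).getD 0 []] =
      Wstr n :: Bstr n :: pl n := by
    intro n
    rw [hhead]
    show (Wstr n :: List.dropLast (Bstr n :: pl n)) ++ [Wstr (n + 1)] = _
    rw [← hpll n]
    simp [List.dropLast_append_getLast]
  have hchain : ∀ n, List.Chain' (Step (rotateSRS R))
      (chunk n ++ [(chunk (n + 1)).getD 0 []]) := by
    intro n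
    rw [hfull n]
    show List.Chain (Step (rotateSRS R)) (Wstr n) (Bstr n :: pl n)
    exact List.Chain.cons (step0 n)
      (List.IsChain.imp (fun a b hab => step_mono (fun p hp => Or.inl hp) hab) (hplc n))
  refine ⟨gseq chunk [], gseq_step (Step (rotateSRS R)) chunk [] hne hchain, ?_⟩
  have hKg : ∀ n, CycleStep S (f n) (f (n + 1)) →
      Step { p : List Sym × List Sym |
              ∃ l r, (l, r) ∈ S ∧ p = (symW :: l.map ca, symB :: r.map ca) }
        (gseq chunk [] (KK chunk n)) (gseq chunk [] (KK chunk n + 1)) := by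
    intro n hn
    have hg0 : gseq chunk [] (KK chunk n) = Wstr n := by
      have := gseq_at chunk [] hne n 0 (by simp [hchunk])
      rwa [Nat.add_zero, hhead] at this
    have hg1 : gseq chunk [] (KK chunk n + 1) = Bstr n := by
      rcases hp : pl n with _ | ⟨s, pl'⟩
      · have hlen : (chunk n).length = 1 := by simp [hchunk, hp]
        have hK1 : KK chunk n + 1 = KK chunk (n + 1) := by
          show _ = KK chunk n + (chunk n).length
          omega
        have hB : Bstr n = Wstr (n + 1) := by
          have := hpll n
          rw [hp] at this
          simpa using this
        rw [hK1]
        have := gseq_at chunk [] hne (n + 1) 0 (by simp [hchunk])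
        rw [Nat.add_zero, hhead] at this
        rw [this, hB]
      · have := gseq_at chunk [] hne n 1 (by simp [hchunk, hp])
        rw [this]
        simp [hchunk, hp]
    rw [hg0, hg1]
    exact stepS n hn
  have hsub : (KK chunk) '' {n | CycleStep S (f n) (f (n + 1))} ⊆
      {k | Step { p : List Sym × List Sym |
              ∃ l r, (l, r) ∈ S ∧ p = (symW :: l.map ca, symB :: r.map ca) }
            (gseq chunk [] k) (gseq chunk [] (k + 1))} := by
    rintro k ⟨n, hn, rfl⟩
    exact hKg n hn
  exact (hinf.image ((KK_mono chunk hne).injective.injOn)).mono hsub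

end Dev9
section Dev10
open RotSym List Relation

variable {α : Type*}

local notation "Sym" => RotSym α

theorem rot_not_W {l r : List Sym} (h : (l, r) ∈ rotSRS α) (l₀ : List α) :
    l ≠ symW :: l₀.map ca := by
  rcases h with h | ⟨a, h⟩ | ⟨a, h⟩ | ⟨a, h⟩ | h | ⟨c, d, h⟩ | ⟨c, h⟩ | ⟨b, h⟩ | ⟨a, h⟩ |
      h | ⟨d, h⟩ | h | ⟨e, h⟩ | h <;>
    (rw [Prod.mk.injEq] at h; obtain ⟨rfl, rfl⟩ := h) <;> simp

theorem mapca_inj {x y : List α} (h : x.map ca = y.map ca) : x = y := by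
  have : Function.Injective (ca : α → Sym) := fun a b hab => by injection hab
  exact List.map_injective_iff.2 this h

theorem soundness {S R : Set (List α × List α)} (hSR : S ⊆ R)
    (h : ¬ RelTerminating
        (Step { p : List (RotSym α) × List (RotSym α) |
                  ∃ l r, (l, r) ∈ S ∧ p = (symW :: l.map ca, symB :: r.map ca) })
        (Step (rotateSRS R))) :
    ¬ RelTerminating (CycleStep S) (CycleStep R) := by
  set SR' : Set (List Sym × List Sym) :=
    { p | ∃ l r, (l, r) ∈ S ∧ p = (symW :: l.map ca, symB :: r.map ca) } with hSR'
  rw [RelTerminating, not_not] at h ⊢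
  obtain ⟨f, hstep, hinf⟩ := h
  have hwit : ∀ n, ∃ w : List Sym × List Sym × List Sym × List Sym,
      (w.2.1, w.2.2.1) ∈ rotateSRS R ∧ f n = w.1 ++ w.2.1 ++ w.2.2.2 ∧
      f (n + 1) = w.1 ++ w.2.2.1 ++ w.2.2.2 ∧
      (Step SR' (f n) (f (n + 1)) →
        ∃ l₀ r₀, (l₀, r₀) ∈ S ∧ w.2.1 = symW :: l₀.map ca ∧
          w.2.2.1 = symB :: r₀.map ca) := by
    intro n
    by_cases hn : Step SR' (f n) (f (n + 1))
    · obtain ⟨u, v, l, r, hmem, hx, hy⟩ := hn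
      obtain ⟨l₀, r₀, hS0, hp⟩ := hmem
      rw [Prod.mk.injEq] at hp
      exact ⟨(u, l, r, v), Or.inr ⟨l₀, r₀, hSR hS0, by rw [hp.1, hp.2]⟩, hx, hy,
        fun _ => ⟨l₀, r₀, hS0, hp.1, hp.2⟩⟩
    · obtain ⟨u, v, l, r, hmem, hx, hy⟩ := hstep n
      exact ⟨(u, l, r, v), hmem, hx, hy, fun hc => absurd hc hn⟩
  choose wit hmem hfx hfy hws using hwit
  have hqcf : ∀ n, qc (f (n + 1)) = qc (f n) := by
    intro n
    rw [hfx n, hfy n]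
    obtain ⟨h1, h2⟩ := rule_qc (hmem n)
    simp [h1, h2]
  have hqconst : ∀ n, qc (f n) = qc (f 0) := by
    intro n
    induction n with
    | zero => rfl
    | succ n ih => rw [hqcf, ih]
  have hkb : ∀ n, qc (wit n).1 ≤ qc (f 0) := by
    intro n
    have := hqconst n
    rw [hfx n] at this
    simp at this
    omega
  obtain ⟨i, hi⟩ : ∃ i, {n | Step SR' (f n) (f (n + 1)) ∧ qc (wit n).1 = i}.Infinite := by
    by_contra hno
    push_neg at hno
    have hsub : {n | Step SR' (f n) (f (n + 1))} ⊆
        ⋃ i ∈ Finset.range (qc (f 0) + 1),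
          {n | Step SR' (f n) (f (n + 1)) ∧ qc (wit n).1 = i} := by
      intro n hn
      simp only [Set.mem_iUnion, Finset.mem_range, Set.mem_setOf_eq]
      exact ⟨qc (wit n).1, by have := hkb n; omega, hn, rfl⟩
    exact hinf ((Set.Finite.biUnion (Finset.range (qc (f 0) + 1)).finite_toSet
      (fun i _ => (hno i))).subset hsub)
  obtain ⟨n₀, hn₀⟩ := hi.nonempty
  obtain ⟨l₀, r₀, hl₀S, hleq, hreq⟩ := hws n₀ hn₀.1
  have hbase : GoodW (f n₀) i (Blk.bW (l₀ ++ (caSplit (wit n₀).2.2.2).1)) := by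
    refine ⟨(wit n₀).1, (caSplit (wit n₀).2.2.2).2, ?_, hn₀.2, (caSplit_spec _).2⟩
    rw [hfx n₀, hleq]
    conv_lhs => rw [(caSplit_spec ((wit n₀).2.2.2)).1]
    simp [bstr]
  have keyax : ∀ m (b : Blk α), GoodW (f (n₀ + m)) i b →
      ∃ b', GoodW (f (n₀ + m + 1)) i b' ∧
        ((phi b ~r phi b' ∧
            ¬(qc (wit (n₀ + m)).1 = i ∧
              ∃ l₁ : List α, (wit (n₀ + m)).2.1 = symW :: l₁.map ca)) ∨
          (∃ l₁ r₁ w, (wit (n₀ + m)).2.1 = symW :: l₁.map ca ∧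
            (wit (n₀ + m)).2.2.1 = symB :: r₁.map ca ∧
            Sim (l₁ ++ w) (phi b) ∧ Sim (r₁ ++ w) (phi b'))) := by
    intro m b hb
    obtain ⟨p, q, heqb, hqp, hq⟩ := hb
    have heq2 : (wit (n₀ + m)).1 ++ (wit (n₀ + m)).2.1 ++ (wit (n₀ + m)).2.2.2 =
        p ++ bstr b ++ q := by rw [← hfx (n₀ + m), heqb]
    obtain ⟨b', ⟨p', q', hbeq, hqp', hq'⟩, hrel⟩ := key_step (hmem (n₀ + m)) heq2 hq
    rw [hqp] at hrel hqp'
    exact ⟨b', ⟨p', q', by rw [hfy (n₀ + m)]; exact hbeq, hqp', hq'⟩, hrel⟩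
  let CH : ∀ m : ℕ, {b : Blk α // GoodW (f (n₀ + m)) i b} :=
    fun m => Nat.rec ⟨_, hbase⟩
      (fun m ih => ⟨(keyax m ih.1 ih.2).choose, (keyax m ih.1 ih.2).choose_spec.1⟩) m
  set c : ℕ → List α := fun m => phi (CH m).1 with hc
  have hCH : ∀ m,
      ((c m ~r c (m + 1) ∧
          ¬(qc (wit (n₀ + m)).1 = i ∧
            ∃ l₁ : List α, (wit (n₀ + m)).2.1 = symW :: l₁.map ca)) ∨
        (∃ l₁ r₁ w, (wit (n₀ + m)).2.1 = symW :: l₁.map ca ∧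
          (wit (n₀ + m)).2.2.1 = symB :: r₁.map ca ∧
          Sim (l₁ ++ w) (c m) ∧ Sim (r₁ ++ w) (c (m + 1)))) :=
    fun m => (keyax m (CH m).1 (CH m).2).choose_spec.2
  have hrel2 : ∀ m, c m ~r c (m + 1) ∨ CycleStep R (c m) (c (m + 1)) := by
    intro m
    rcases hCH m with ⟨hrot, -⟩ | ⟨l₁, r₁, w, hle, hre, hs1, hs2⟩
    · exact Or.inl hrot
    · right
      rcases hmem (n₀ + m) with hrot' | ⟨l₂, r₂, hR2, hpe⟩
      · exact absurd hle (rot_not_W hrot' l₁)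
      · rw [Prod.mk.injEq] at hpe
        have hl12 : l₁ = l₂ := by
          apply mapca_inj
          have h3 := hpe.1.symm.trans hle
          injection h3 with h4 h5
          exact h5.symm
        have hr12 : r₁ = r₂ := by
          apply mapca_inj
          have h3 := hpe.2.symm.trans hre
          injection h3 with h4 h5
          exact h5.symm
        exact ⟨l₁, r₁, w, by rw [hl12, hr12]; exact hR2, hs1, hs2⟩
  have hrelS : ∀ m, Step SR' (f (n₀ + m)) (f (n₀ + m + 1)) → qc (wit (n₀ + m)).1 = i →
      CycleStep S (c m) (c (m + 1)) := by
    intro m hmk hki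
    obtain ⟨l₁, r₁, hS1, hle1, hre1⟩ := hws (n₀ + m) hmk
    rcases hCH m with ⟨-, hneg⟩ | ⟨l₂, r₂, w, hle2, hre2, hs1, hs2⟩
    · exact absurd ⟨hki, l₁, hle1⟩ hneg
    · have hl12 : l₂ = l₁ := by
        apply mapca_inj
        have := hle2.symm.trans hle1
        injection this
      have hr12 : r₂ = r₁ := by
        apply mapca_inj
        have := hre2.symm.trans hre1
        injection this
      exact ⟨l₂, r₂, w, by rw [hl12, hr12]; exact hS1, hs1, hs2⟩
  have hMAI : {m | Step SR' (f (n₀ + m)) (f (n₀ + m + 1)) ∧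
      qc (wit (n₀ + m)).1 = i}.Infinite := by
    have h1 : ({n | Step SR' (f n) (f (n + 1)) ∧ qc (wit n).1 = i} \ Set.Iio n₀).Infinite :=
      hi.diff (Set.finite_Iio n₀)
    have h2 : ({n | Step SR' (f n) (f (n + 1)) ∧ qc (wit n).1 = i} \ Set.Iio n₀) ⊆
        Set.range (n₀ + ·) := by
      rintro x ⟨-, hx⟩
      simp only [Set.mem_Iio, not_lt] at hx
      exact ⟨x - n₀, by simp; omega⟩
    refine (h1.preimage (f := (n₀ + ·)) h2).mono ?_
    rintro m ⟨hm, -⟩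
    exact hm
  set P : ℕ → Prop := fun m => CycleStep R (c m) (c (m + 1)) with hP
  have hMD : ∀ m, (Step SR' (f (n₀ + m)) (f (n₀ + m + 1)) ∧
      qc (wit (n₀ + m)).1 = i) → P m :=
    fun m hm => cycleStep_mono hSR (hrelS m hm.1 hm.2)
  have hDinf : (setOf P).Infinite := hMAI.mono hMD
  have gap : ∀ j d, Nat.nth P j + 1 + d ≤ Nat.nth P (j + 1) →
      c (Nat.nth P j + 1) ~r c (Nat.nth P j + 1 + d) := by
    intro j d
    induction d with
    | zero => intro _; exact .refl _
    | succ d ih =>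
      intro hd
      have h1 := ih (by omega)
      have hm : ¬ P (Nat.nth P j + 1 + d) := by
        intro hmem'
        have := Nat.le_nth_of_lt_nth_succ (k := j)
          (a := Nat.nth P j + 1 + d) (by omega) hmem'
        omega
      have h2 : c (Nat.nth P j + 1 + d) ~r c (Nat.nth P j + 1 + d + 1) :=
        (hrel2 _).resolve_right hm
      exact h1.trans h2
  have hchainrot : ∀ j, c (Nat.nth P j + 1) ~r c (Nat.nth P (j + 1)) := by
    intro j
    have hlt : Nat.nth P j < Nat.nth P (j + 1) := (Nat.nth_lt_nth hDinf).2 (by omega)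
    have := gap j (Nat.nth P (j + 1) - (Nat.nth P j + 1)) (by omega)
    have e : Nat.nth P j + 1 + (Nat.nth P (j + 1) - (Nat.nth P j + 1)) =
        Nat.nth P (j + 1) := by omega
    rwa [e] at this
  refine ⟨fun j => c (Nat.nth P j), ?_, ?_⟩
  · intro j
    have hDj : P (Nat.nth P j) := Nat.nth_mem_of_infinite hDinf j
    exact cycleStep_rotRight hDj (hchainrot j)
  · have hsubJ : (Nat.nth P) ⁻¹' {m | Step SR' (f (n₀ + m)) (f (n₀ + m + 1)) ∧
        qc (wit (n₀ + m)).1 = i} ⊆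
        {j | CycleStep S (c (Nat.nth P j)) (c (Nat.nth P (j + 1)))} := by
      intro j hj
      exact cycleStep_rotRight (hrelS _ hj.1 hj.2) (hchainrot j)
    refine (Set.Infinite.preimage hMAI ?_).mono hsubJ
    intro m hm
    exact Nat.subset_range_nth (hMD m hm)

end Dev10
open RotSym in
/-- soundness and completeness of `rotate_rel` for relative termination. -/
theorem rotateRel_sound_and_complete {α : Type*} [Finite α] (S R : Set (List α × List α))
    (hSR : S ⊆ R) (hfin : R.Finite) (hne : ∀ p ∈ R, p.1 ≠ []) :
    RelTerminating
        (Step { p : List (RotSym α) × List (RotSym α) |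
                  ∃ l r, (l, r) ∈ S ∧ p = (symW :: l.map ca, symB :: r.map ca) })
        (Step (rotateSRS R)) ↔
      RelTerminating (CycleStep S) (CycleStep R) := by
  constructor
  · intro hstr
    by_contra hcy
    exact completeness hSR hcy hstr
  · intro hcy
    by_contra hstr
    exact soundness hSR hstr hcy

end CycleRewriting
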